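/- Let X be a nonempty finite type and p : ℝ → X → ℝ a parametrized family of probability mass functions (p(θ, x) > 0, ∑_{x∈X} p(θ, x) = 1, and θ ↦ p(θ, x) differentiable for each x). Let g : X → ℝ and let 1 ≤ k ≤ n. Define maxg@k(θ) = ∑_{y : Fin k → X} (∏_{i} p(θ, yᵢ)) · max_{1≤i≤k} g(yᵢ). For a tuple x : Fin n → X, define s_i(x) = (1/C(n,k)) · ∑_{I ⊆ {1,...,n}, |I| = k, i ∈ I} max_{j∈I} g(x_j). Then for every θ: ∑_{x : Fin n → X} (∏_{i} p(θ, xᵢ)) · ∑_{i=1}^{n} s_i(x) · (d/dθ p(θ, xᵢ))/p(θ, xᵢ) = d/dθ maxg@k(θ). In other words, the estimator ∑_i s_i(x) ∇_θ log p(xᵢ|θ) is an unbiased estimator of the gradient of maxg@k. -/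

import Mathlib

/-- The maximum of `g` over a finite index set `I` (equal to `max_{i ∈ I} g i`
whenever `I` is nonempty). -/
noncomputable def finsetMax {α : Type*} (I : Finset α) (g : α → ℝ) : ℝ :=
  WithBot.unbotD 0 (I.sup fun a => ((g a : ℝ) : WithBot ℝ))

open Finset

-- marginalization
lemma marg_one {X β : Type*} [Fintype X] [Fintype β] [DecidableEq β]
    (q : X → ℝ) (hs : ∑ x, q x = 1) :
    ∑ v : β → X, ∏ b, q (v b) = 1 := by
  rw [← Fintype.prod_sum (fun _ : β => q)]
  simp [hs]

lemma core_lemma {X : Type*} [Fintype X] (q d g : X → ℝ)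
    (hs : ∑ x, q x = 1)
    {n k : ℕ} (I : Finset (Fin n)) (hI : I.card = k) :
    ∑ x : Fin n → X, (∏ j, q (x j)) * (finsetMax I fun j => g (x j)) *
        (∑ i ∈ I, d (x i) / q (x i))
    = ∑ y : Fin k → X, (∏ i, q (y i)) * (finsetMax Finset.univ fun i => g (y i)) *
        (∑ i, d (y i) / q (y i)) := by
  classical
  set F : (Fin n → X) → ℝ := fun x =>
    (∏ j, q (x j)) * (finsetMax I fun j => g (x j)) * (∑ i ∈ I, d (x i) / q (x i)) with hF
  let e : ({a // a ∈ I} ⊕ {a // a ∉ I} → X) ≃ (Fin n → X) :=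
    Equiv.arrowCongr (Equiv.sumCompl (· ∈ I)) (Equiv.refl X)
  have h1 : ∑ x : Fin n → X, F x
      = ∑ z : ({a // a ∈ I} → X) × ({a // a ∉ I} → X),
          F (e ((Equiv.sumArrowEquivProdArrow _ _ X).symm z)) := by
    rw [← Equiv.sum_comp e F, ← Equiv.sum_comp (Equiv.sumArrowEquivProdArrow _ _ X).symm]
  set A : ({a // a ∈ I} → X) → ℝ := fun u =>
    (∏ a, q (u a)) * (WithBot.unbotD 0 (Finset.univ.sup fun a : {a // a ∈ I} =>
      ((g (u a) : ℝ) : WithBot ℝ))) * (∑ a, d (u a) / q (u a)) with hA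
  have key : ∀ (u : {a // a ∈ I} → X) (v : {a // a ∉ I} → X),
      F (e ((Equiv.sumArrowEquivProdArrow _ _ X).symm (u, v)))
      = A u * ∏ b, q (v b) := by
    intro u v
    set x : Fin n → X := e ((Equiv.sumArrowEquivProdArrow _ _ X).symm (u, v)) with hx
    have hxI : ∀ (j : Fin n) (h : j ∈ I), x j = u ⟨j, h⟩ := by
      intro j h
      simp [hx, e, Equiv.arrowCongr, Equiv.sumCompl_symm_apply_of_pos h]
    have hxc : ∀ (j : Fin n) (h : j ∉ I), x j = v ⟨j, h⟩ := by
      intro j h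
      simp [hx, e, Equiv.arrowCongr, Equiv.sumCompl_symm_apply_of_neg h]
    have hprod : (∏ j, q (x j)) = (∏ a, q (u a)) * ∏ b, q (v b) := by
      rw [← Equiv.prod_comp (Equiv.sumCompl (· ∈ I)) (fun j => q (x j)),
        Fintype.prod_sum_type]
      congr 1
      · exact Finset.prod_congr rfl fun a _ => by rw [Equiv.sumCompl_apply_inl, hxI a.1 a.2]
      · exact Finset.prod_congr rfl fun b _ => by rw [Equiv.sumCompl_apply_inr, hxc b.1 b.2]
    have hmax : (finsetMax I fun j => g (x j))
        = WithBot.unbotD 0 (Finset.univ.sup fun a : {a // a ∈ I} => ((g (u a) : ℝ) : WithBot ℝ)) := by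
      unfold finsetMax
      congr 1
      rw [← Finset.sup_attach, Finset.univ_eq_attach]
      exact Finset.sup_congr rfl fun a _ => by simp [hxI a.1 a.2]
    have hsum' : (∑ i ∈ I, d (x i) / q (x i)) = ∑ a, d (u a) / q (u a) := by
      rw [← Finset.sum_attach I (fun i => d (x i) / q (x i)), Finset.univ_eq_attach]
      exact Finset.sum_congr rfl fun a _ => by simp [hxI a.1 a.2]
    simp only [hF, hprod, hmax, hsum', hA]
    ring
  rw [h1, Fintype.sum_prod_type]
  simp_rw [key, ← Finset.mul_sum, marg_one q hs, mul_one]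
  have σ : Fin k ≃ {a // a ∈ I} := (I.orderIsoOfFin hI).toEquiv
  rw [← Equiv.sum_comp (Equiv.arrowCongr σ (Equiv.refl X)) A]
  apply Finset.sum_congr rfl
  intro w _
  have happ : ∀ a, (Equiv.arrowCongr σ (Equiv.refl X) w) a = w (σ.symm a) := fun a => rfl
  have hsup : (Finset.univ.sup fun a : {a // a ∈ I} => ((g (w (σ.symm a)) : ℝ) : WithBot ℝ))
      = Finset.univ.sup fun i : Fin k => ((g (w i) : ℝ) : WithBot ℝ) := by
    apply le_antisymm
    · exact Finset.sup_le fun a _ =>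
        Finset.le_sup (f := fun i : Fin k => ((g (w i) : ℝ) : WithBot ℝ)) (Finset.mem_univ (σ.symm a))
    · refine Finset.sup_le fun i _ => ?_
      have := Finset.le_sup (f := fun a : {a // a ∈ I} => ((g (w (σ.symm a)) : ℝ) : WithBot ℝ))
        (Finset.mem_univ (σ i))
      simpa using this
  simp only [hA, happ, finsetMax, hsup,
    Equiv.prod_comp σ.symm (fun i => q (w i)),
    Equiv.sum_comp σ.symm (fun i => d (w i) / q (w i))]

lemma deriv_maxgk {X : Type*} [Fintype X] (p : ℝ → X → ℝ)
    (hpos : ∀ θ x, 0 < p θ x) (hdiff : ∀ x, Differentiable ℝ fun θ => p θ x)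
    (g : X → ℝ) (k : ℕ) (θ : ℝ) :
    deriv (fun t => ∑ y : Fin k → X,
        (∏ i, p t (y i)) * finsetMax (Finset.univ : Finset (Fin k)) (fun i => g (y i))) θ
    = ∑ y : Fin k → X, (∏ i, p θ (y i)) * finsetMax Finset.univ (fun i => g (y i)) *
        (∑ i, deriv (fun t => p t (y i)) θ / p θ (y i)) := by
  classical
  have H : HasDerivAt (fun t => ∑ y : Fin k → X,
      (∏ i, p t (y i)) * finsetMax (Finset.univ : Finset (Fin k)) (fun i => g (y i)))
      (∑ y : Fin k → X, (∑ i, (∏ j ∈ Finset.univ.erase i, p θ (y j)) •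
          deriv (fun t => p t (y i)) θ) * finsetMax Finset.univ (fun i => g (y i))) θ := by
    apply HasDerivAt.fun_sum
    intro y _
    exact (HasDerivAt.fun_finsetProd fun i _ => ((hdiff (y i)) θ).hasDerivAt).mul_const _
  rw [H.deriv]
  refine Finset.sum_congr rfl fun y _ => ?_
  have hterm : ∀ i : Fin k, (∏ j ∈ Finset.univ.erase i, p θ (y j)) •
      deriv (fun t => p t (y i)) θ
      = (∏ j, p θ (y j)) * (deriv (fun t => p t (y i)) θ / p θ (y i)) := by
    intro i
    rw [smul_eq_mul, ← Finset.mul_prod_erase Finset.univ (fun j => p θ (y j))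
      (Finset.mem_univ i)]
    have := (hpos θ (y i)).ne'
    field_simp
  simp_rw [hterm, ← Finset.mul_sum]
  ring

/-- The estimator ∑_i s_i(x) ∇_θ log p(xᵢ|θ), with
s_i(x) = (1/C(n,k)) ∑_{|I| = k, i ∈ I} max_{j∈I} g(x_j), is an unbiased
estimator of the gradient of
maxg@k(θ) = ∑_{y : Fin k → X} (∏ᵢ p(θ, yᵢ)) · max_{1≤i≤k} g(yᵢ). -/
theorem unbiased_maxgk_gradient_estimator {X : Type*} [Fintype X] [Nonempty X]
    (p : ℝ → X → ℝ)
    (hpos : ∀ θ x, 0 < p θ x)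
    (hsum : ∀ θ, ∑ x, p θ x = 1)
    (hdiff : ∀ x, Differentiable ℝ fun θ => p θ x)
    (g : X → ℝ)
    (n k : ℕ) (hk : 1 ≤ k) (hkn : k ≤ n) (θ : ℝ) :
    ∑ x : Fin n → X, (∏ i, p θ (x i)) *
        ∑ i, ((1 / (n.choose k : ℝ)) *
            ∑ I ∈ (Finset.powersetCard k (Finset.univ : Finset (Fin n))).filter
                (fun I => i ∈ I),
              finsetMax I (fun j => g (x j))) *
          (deriv (fun t => p t (x i)) θ / p θ (x i))
      = deriv (fun t => ∑ y : Fin k → X,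
          (∏ i, p t (y i)) * finsetMax (Finset.univ : Finset (Fin k)) (fun i => g (y i))) θ := by
  classical
  have hC : (n.choose k : ℝ) ≠ 0 := Nat.cast_ne_zero.mpr (Nat.choose_pos hkn).ne'
  rw [deriv_maxgk p hpos hdiff g k θ]
  set P := Finset.powersetCard k (Finset.univ : Finset (Fin n)) with hP
  set D : ℝ := ∑ y : Fin k → X, (∏ i, p θ (y i)) * finsetMax Finset.univ (fun i => g (y i)) *
      (∑ i, deriv (fun t => p t (y i)) θ / p θ (y i)) with hD
  have step1 : ∀ x : Fin n → X,
      (∏ i, p θ (x i)) * ∑ i, ((1 / (n.choose k : ℝ)) *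
          ∑ I ∈ P.filter (fun I => i ∈ I), finsetMax I (fun j => g (x j))) *
        (deriv (fun t => p t (x i)) θ / p θ (x i))
      = (1 / (n.choose k : ℝ)) * ∑ I ∈ P, (∏ j, p θ (x j)) * finsetMax I (fun j => g (x j)) *
          (∑ i ∈ I, deriv (fun t => p t (x i)) θ / p θ (x i)) := by
    intro x
    have expand : ∀ i : Fin n, (∏ j, p θ (x j)) * (((1 / (n.choose k : ℝ)) *
        ∑ I ∈ P.filter (fun I => i ∈ I), finsetMax I (fun j => g (x j))) *
          (deriv (fun t => p t (x i)) θ / p θ (x i)))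
        = ∑ I ∈ P.filter (fun I => i ∈ I),
            (1 / (n.choose k : ℝ)) * ((∏ j, p θ (x j)) * finsetMax I (fun j => g (x j)) *
              (deriv (fun t => p t (x i)) θ / p θ (x i))) := by
      intro i
      simp only [Finset.mul_sum, Finset.sum_mul]
      exact Finset.sum_congr rfl fun I _ => by ring
    rw [Finset.mul_sum]
    simp_rw [expand]
    rw [Finset.sum_comm' (t' := P) (s' := fun I => Finset.univ.filter (fun i => i ∈ I))]
    · rw [Finset.mul_sum]
      refine Finset.sum_congr rfl fun I _ => ?_
      rw [Finset.filter_univ_mem]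
      simp only [← Finset.mul_sum]
    · intro i I
      simp [Finset.mem_filter]
      tauto
  simp_rw [step1]
  rw [← Finset.mul_sum, Finset.sum_comm]
  have core : ∀ I ∈ P, (∑ x : Fin n → X, (∏ j, p θ (x j)) * finsetMax I (fun j => g (x j)) *
      (∑ i ∈ I, deriv (fun t => p t (x i)) θ / p θ (x i))) = D := by
    intro I hIP
    have hI : I.card = k := (Finset.mem_powersetCard.mp hIP).2
    exact core_lemma (p θ) (fun a => deriv (fun t => p t a) θ) g (hsum θ) I hI
  rw [Finset.sum_congr rfl core, Finset.sum_const]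
  have hcard : P.card = n.choose k := by
    rw [hP, Finset.card_powersetCard, Finset.card_univ, Fintype.card_fin]
  rw [hcard, nsmul_eq_mul]
  field_simp
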